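/- Let φ_0 = ψ_0 = (x_0) be 1×1 matrices over the polynomial ring k[x_0,...,x_{2m+2}], and inductively define the 2^{m+1}×2^{m+1} matrices φ_{m+1} = [[φ_m, x_{2m+1}·I], [x_{2m+2}·I, -ψ_m]] and ψ_{m+1} = [[ψ_m, x_{2m+1}·I], [x_{2m+2}·I, -φ_m]]. Then φ_m · ψ_m = (x_0^2 + x_1 x_2 + ... + x_{2m-1} x_{2m}) · I, i.e., the pair (φ_m, ψ_m) is a matrix factorization of the quadratic form x_0^2 + x_1 x_2 + ... + x_{2m-1} x_{2m}. -/

import Mathlib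

open MvPolynomial Matrix

/-- Index type of size `2^m`. -/
def SpinIdx : ℕ → Type
  | 0 => Unit
  | m + 1 => SpinIdx m ⊕ SpinIdx m

instance spinIdxFintype : (m : ℕ) → Fintype (SpinIdx m)
  | 0 => inferInstanceAs (Fintype Unit)
  | m + 1 => letI := spinIdxFintype m; inferInstanceAs (Fintype (SpinIdx m ⊕ SpinIdx m))

instance spinIdxDecEq : (m : ℕ) → DecidableEq (SpinIdx m)
  | 0 => inferInstanceAs (DecidableEq Unit)
  | m + 1 => letI := spinIdxDecEq m; inferInstanceAs (DecidableEq (SpinIdx m ⊕ SpinIdx m))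

-- The matrices `φ_m` and `ψ_m` over `k[x_0, x_1, x_2, …]`:
-- `φ_0 = ψ_0 = (x_0)`,
-- `φ_{m+1} = [[φ_m, x_{2m+1}·I], [x_{2m+2}·I, -ψ_m]]`, and
-- `ψ_{m+1} = [[ψ_m, x_{2m+1}·I], [x_{2m+2}·I, -φ_m]]`.
mutual
  noncomputable def phiMat (k : Type*) [CommRing k] :
      (m : ℕ) → Matrix (SpinIdx m) (SpinIdx m) (MvPolynomial ℕ k)
    | 0 => fun _ _ => X 0
    | m + 1 =>
        Matrix.fromBlocks (phiMat k m)
          ((X (2 * m + 1) : MvPolynomial ℕ k) • (1 : Matrix (SpinIdx m) (SpinIdx m) (MvPolynomial ℕ k)))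
          ((X (2 * m + 2) : MvPolynomial ℕ k) • (1 : Matrix (SpinIdx m) (SpinIdx m) (MvPolynomial ℕ k)))
          (-(psiMat k m))
  noncomputable def psiMat (k : Type*) [CommRing k] :
      (m : ℕ) → Matrix (SpinIdx m) (SpinIdx m) (MvPolynomial ℕ k)
    | 0 => fun _ _ => X 0
    | m + 1 =>
        Matrix.fromBlocks (psiMat k m)
          ((X (2 * m + 1) : MvPolynomial ℕ k) • (1 : Matrix (SpinIdx m) (SpinIdx m) (MvPolynomial ℕ k)))
          ((X (2 * m + 2) : MvPolynomial ℕ k) • (1 : Matrix (SpinIdx m) (SpinIdx m) (MvPolynomial ℕ k)))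
          (-(phiMat k m))
end

lemma phiMat_psiMat_both (k : Type*) [CommRing k] (m : ℕ) :
    phiMat k m * psiMat k m =
      ((X 0 ^ 2 + ∑ i ∈ Finset.range m, X (2 * i + 1) * X (2 * i + 2) : MvPolynomial ℕ k)) •
        (1 : Matrix (SpinIdx m) (SpinIdx m) (MvPolynomial ℕ k)) ∧
    psiMat k m * phiMat k m =
      ((X 0 ^ 2 + ∑ i ∈ Finset.range m, X (2 * i + 1) * X (2 * i + 2) : MvPolynomial ℕ k)) •
        (1 : Matrix (SpinIdx m) (SpinIdx m) (MvPolynomial ℕ k)) := by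
  induction m with
  | zero =>
      constructor <;>
      · ext i j
        have hij : i = j := Subsingleton.elim (α := Unit) i j
        subst hij
        erw [Matrix.mul_apply]
        simp [phiMat, psiMat, Matrix.mul_apply, Matrix.one_apply, sq, show Fintype.card (SpinIdx 0) = 1 from rfl, Finset.sum_const]
  | succ m ih =>
      obtain ⟨h1, h2⟩ := ih
      have key : ∀ A B : Matrix (SpinIdx m) (SpinIdx m) (MvPolynomial ℕ k),
          A * B =
            ((X 0 ^ 2 + ∑ i ∈ Finset.range m, X (2 * i + 1) * X (2 * i + 2) : MvPolynomial ℕ k)) •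
              1 →
          B * A =
            ((X 0 ^ 2 + ∑ i ∈ Finset.range m, X (2 * i + 1) * X (2 * i + 2) : MvPolynomial ℕ k)) •
              1 →
          Matrix.fromBlocks A
            ((X (2 * m + 1) : MvPolynomial ℕ k) • 1)
            ((X (2 * m + 2) : MvPolynomial ℕ k) • 1) (-B) *
          Matrix.fromBlocks B
            ((X (2 * m + 1) : MvPolynomial ℕ k) • 1)
            ((X (2 * m + 2) : MvPolynomial ℕ k) • 1) (-A) =
          ((X 0 ^ 2 + ∑ i ∈ Finset.range (m + 1), X (2 * i + 1) * X (2 * i + 2) :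
            MvPolynomial ℕ k)) •
            (1 : Matrix (SpinIdx (m + 1)) (SpinIdx (m + 1)) (MvPolynomial ℕ k)) := by
        intro A B hAB hBA
        rw [Matrix.fromBlocks_multiply, Finset.sum_range_succ]
        rw [show (1 : Matrix (SpinIdx (m + 1)) (SpinIdx (m + 1)) (MvPolynomial ℕ k)) =
          Matrix.fromBlocks 1 0 0 1 from (Matrix.fromBlocks_one).symm]
        erw [Matrix.fromBlocks_smul]
        rw [Matrix.fromBlocks_inj]
        refine ⟨?_, ?_, ?_, ?_⟩
        · rw [hAB]
          simp only [Matrix.smul_mul, Matrix.mul_smul, smul_smul, smul_eq_mul, Matrix.mul_one,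
            add_smul, mul_comm (X (2 * m + 2) : MvPolynomial ℕ k)]
          abel
        · simp [Matrix.mul_smul, Matrix.smul_mul]
        · simp [Matrix.mul_smul, Matrix.smul_mul]
        · rw [neg_mul_neg, hBA]
          simp only [Matrix.smul_mul, Matrix.mul_smul, smul_smul, smul_eq_mul, Matrix.mul_one,
            add_smul, mul_comm (X (2 * m + 2) : MvPolynomial ℕ k)]
          abel
      exact ⟨by rw [phiMat, psiMat]; exact key _ _ h1 h2,
             by rw [phiMat, psiMat]; exact key _ _ h2 h1⟩

/-- `(φ_m, ψ_m)` is a matrix factorization of `x_0^2 + x_1 x_2 + ⋯ + x_{2m-1} x_{2m}`. -/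
theorem phiMat_mul_psiMat (k : Type*) [CommRing k] (m : ℕ) :
    phiMat k m * psiMat k m =
      ((X 0 ^ 2 + ∑ i ∈ Finset.range m, X (2 * i + 1) * X (2 * i + 2) : MvPolynomial ℕ k)) •
        (1 : Matrix (SpinIdx m) (SpinIdx m) (MvPolynomial ℕ k)) := by
  exact (phiMat_psiMat_both k m).1
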